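/- For integer d ≥ 3, the maximizer λ_* ∈ (0, 1/(d(d−1))) of g(d,λ) = [1 − d(d−2)λ]·h(dλ/(1 − d(d−2)λ)) satisfies [1 − d(d−1)λ_*]^{d−1} = [1 − d(d−2)λ_*]^{d−2}·λ_*·d; equivalently, y = (1 − d(d−1)λ_*)/(1 − d(d−2)λ_*) satisfies y^{d−1} + y − 1 = 0. -/

import Mathlib

/-- Binary entropy `h(p) = −p log₂ p − (1−p) log₂(1−p)`. -/
noncomputable def binEnt (p : ℝ) : ℝ := -p * Real.logb 2 p - (1 - p) * Real.logb 2 (1 - p)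

/-- `g(d,λ) = [1 − d(d−2)λ]·h(dλ/(1 − d(d−2)λ))`. -/
noncomputable def gFun (d : ℕ) (x : ℝ) : ℝ :=
  (1 - d * (d - 2 : ℝ) * x) * binEnt ((d : ℝ) * x / (1 - d * (d - 2 : ℝ) * x))

/-- the maximizer `λ_* ∈ (0, 1/(d(d−1)))` of `g(d,·)` satisfies
`[1 − d(d−1)λ_*]^{d−1} = [1 − d(d−2)λ_*]^{d−2}·λ_*·d`; equivalently
`y = (1 − d(d−1)λ_*)/(1 − d(d−2)λ_*)` satisfies `y^{d−1} + y − 1 = 0`. -/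
theorem gFun_maximizer_equation (d : ℕ) (hd : 3 ≤ d) (x : ℝ)
    (hx : x ∈ Set.Ioo (0 : ℝ) (1 / ((d : ℝ) * ((d : ℝ) - 1))))
    (hmax : ∀ y ∈ Set.Ioo (0 : ℝ) (1 / ((d : ℝ) * ((d : ℝ) - 1))), gFun d y ≤ gFun d x) :
    (1 - d * ((d : ℝ) - 1) * x) ^ (d - 1) =
      (1 - d * ((d : ℝ) - 2) * x) ^ (d - 2) * x * d ∧
    ((1 - d * ((d : ℝ) - 1) * x) / (1 - d * ((d : ℝ) - 2) * x)) ^ (d - 1) +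
      (1 - d * ((d : ℝ) - 1) * x) / (1 - d * ((d : ℝ) - 2) * x) - 1 = 0 := by
  obtain ⟨hx0, hx1⟩ := hx
  have hd3 : (3:ℝ) ≤ (d:ℝ) := by exact_mod_cast hd
  set D : ℝ := (d:ℝ) with hD
  have hDpos : 0 < D := by linarith
  have hDD1 : 0 < D * (D - 1) := by nlinarith
  -- positivity facts at a general point of the interval
  have key : ∀ y ∈ Set.Ioo (0 : ℝ) (1 / (D * (D - 1))),
      0 < D * y ∧ 0 < 1 - D * (D - 1) * y ∧ 0 < 1 - D * (D - 2) * y := by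
    intro y hy
    obtain ⟨hy0, hy1⟩ := hy
    have h1 : y * (D * (D - 1)) < 1 := by
      have := (lt_div_iff₀ hDD1).mp hy1
      linarith
    refine ⟨by positivity, by nlinarith, by nlinarith⟩
  obtain ⟨hdx, hv, hu⟩ := key x ⟨hx0, hx1⟩
  -- the smooth model function
  set F : ℝ → ℝ := fun t =>
    (-(D * t) * Real.log (D * t) - (1 - D * (D - 1) * t) * Real.log (1 - D * (D - 1) * t)
      + (1 - D * (D - 2) * t) * Real.log (1 - D * (D - 2) * t)) / Real.log 2 with hF
  have hlog2 : Real.log 2 ≠ 0 := by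
    have := Real.log_pos (by norm_num : (1:ℝ) < 2); linarith
  -- gFun = F on the interval
  have hgF : ∀ y ∈ Set.Ioo (0 : ℝ) (1 / (D * (D - 1))), gFun d y = F y := by
    intro y hy
    obtain ⟨hdy, hvy, huy⟩ := key y hy
    have huy' : (1 - D * (D - 2) * y) ≠ 0 := ne_of_gt huy
    have h1 : 1 - D * y / (1 - D * (D - 2) * y)
        = (1 - D * (D - 1) * y) / (1 - D * (D - 2) * y) := by
      rw [eq_div_iff huy', sub_mul, div_mul_cancel₀ _ huy']; ring
    simp only [gFun, binEnt, Real.logb, hF, ← hD, h1]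
    rw [Real.log_div (ne_of_gt hdy) huy', Real.log_div (ne_of_gt hvy) huy']
    field_simp
    ring
  -- x is a local max of F
  have hmem : Set.Ioo (0 : ℝ) (1 / (D * (D - 1))) ∈ nhds x :=
    isOpen_Ioo.mem_nhds ⟨hx0, hx1⟩
  have hloc : IsLocalMax F x := by
    filter_upwards [hmem] with y hy
    rw [← hgF y hy, ← hgF x ⟨hx0, hx1⟩]
    exact hmax y hy
  -- derivative of F at x
  have hder : HasDerivAt F
      ((-((Real.log (D * x) + 1) * D)
        - (Real.log (1 - D * (D - 1) * x) + 1) * (-(D * (D - 1)))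
        + (Real.log (1 - D * (D - 2) * x) + 1) * (-(D * (D - 2)))) / Real.log 2) x := by
    have h1 : HasDerivAt (fun t : ℝ => (D * t) * Real.log (D * t))
        ((Real.log (D * x) + 1) * D) x := by
      have := (Real.hasDerivAt_mul_log (ne_of_gt hdx)).comp x
        ((hasDerivAt_id x).const_mul D)
      simpa [Function.comp_def] using this
    have h1' : HasDerivAt (fun t : ℝ => -(D * t) * Real.log (D * t))
        (-((Real.log (D * x) + 1) * D)) x := by
      simpa [neg_mul, Pi.neg_def] using h1.neg
    have h2 : HasDerivAt (fun t : ℝ =>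
        (1 - D * (D - 1) * t) * Real.log (1 - D * (D - 1) * t))
        ((Real.log (1 - D * (D - 1) * x) + 1) * (-(D * (D - 1)))) x := by
      have hin : HasDerivAt (fun t : ℝ => 1 - D * (D - 1) * t) (-(D * (D - 1))) x := by
        simpa using ((hasDerivAt_id x).const_mul (D * (D - 1))).const_sub 1
      have := (Real.hasDerivAt_mul_log (ne_of_gt hv)).comp x hin
      simpa [Function.comp_def] using this
    have h3 : HasDerivAt (fun t : ℝ =>
        (1 - D * (D - 2) * t) * Real.log (1 - D * (D - 2) * t))
        ((Real.log (1 - D * (D - 2) * x) + 1) * (-(D * (D - 2)))) x := by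
      have hin : HasDerivAt (fun t : ℝ => 1 - D * (D - 2) * t) (-(D * (D - 2))) x := by
        simpa using ((hasDerivAt_id x).const_mul (D * (D - 2))).const_sub 1
      have := (Real.hasDerivAt_mul_log (ne_of_gt hu)).comp x hin
      simpa [Function.comp_def] using this
    exact ((h1'.sub h2).add h3).div_const (Real.log 2)
  -- first order condition
  have hzero := hloc.deriv_eq_zero
  rw [hder.deriv] at hzero
  have hE : -((Real.log (D * x) + 1) * D)
      - (Real.log (1 - D * (D - 1) * x) + 1) * (-(D * (D - 1)))
      + (Real.log (1 - D * (D - 2) * x) + 1) * (-(D * (D - 2))) = 0 := by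
    rcases div_eq_zero_iff.mp hzero with h | h
    · exact h
    · exact absurd h hlog2
  have hfo : (D - 1) * Real.log (1 - D * (D - 1) * x)
      = Real.log (D * x) + (D - 2) * Real.log (1 - D * (D - 2) * x) := by
    have hDne : D ≠ 0 := ne_of_gt hDpos
    have hmul : D * ((D - 1) * Real.log (1 - D * (D - 1) * x))
        = D * (Real.log (D * x) + (D - 2) * Real.log (1 - D * (D - 2) * x)) := by
      linear_combination hE
    exact mul_left_cancel₀ hDne hmul
  -- cast exponents
  have hc1 : ((d - 1 : ℕ) : ℝ) = D - 1 := by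
    rw [Nat.cast_sub (by omega)]; simp [hD]
  have hc2 : ((d - 2 : ℕ) : ℝ) = D - 2 := by
    rw [Nat.cast_sub (by omega)]; simp [hD]
  -- first conclusion
  have hmain : (1 - D * (D - 1) * x) ^ (d - 1)
      = (1 - D * (D - 2) * x) ^ (d - 2) * x * D := by
    have hlhs : Real.log ((1 - D * (D - 1) * x) ^ (d - 1))
        = (D - 1) * Real.log (1 - D * (D - 1) * x) := by
      rw [Real.log_pow, hc1]
    have hrhs : Real.log ((1 - D * (D - 2) * x) ^ (d - 2) * x * D)
        = Real.log (D * x) + (D - 2) * Real.log (1 - D * (D - 2) * x) := by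
      rw [Real.log_mul (by positivity) (ne_of_gt hDpos),
        Real.log_mul (by positivity) (ne_of_gt hx0), Real.log_pow, hc2,
        Real.log_mul (ne_of_gt hDpos) (ne_of_gt hx0)]
      ring
    have hlog : Real.log ((1 - D * (D - 1) * x) ^ (d - 1))
        = Real.log ((1 - D * (D - 2) * x) ^ (d - 2) * x * D) := by
      rw [hlhs, hrhs, hfo]
    have hp1 : (0:ℝ) < (1 - D * (D - 1) * x) ^ (d - 1) := by positivity
    have hp2 : (0:ℝ) < (1 - D * (D - 2) * x) ^ (d - 2) * x * D := by positivity
    calc (1 - D * (D - 1) * x) ^ (d - 1)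
        = Real.exp (Real.log ((1 - D * (D - 1) * x) ^ (d - 1))) := (Real.exp_log hp1).symm
      _ = Real.exp (Real.log ((1 - D * (D - 2) * x) ^ (d - 2) * x * D)) := by rw [hlog]
      _ = (1 - D * (D - 2) * x) ^ (d - 2) * x * D := Real.exp_log hp2
  refine ⟨hmain, ?_⟩
  -- second conclusion
  have hune : (1 - D * (D - 2) * x) ≠ 0 := ne_of_gt hu
  have hsucc : d - 1 = (d - 2) + 1 := by omega
  have hupow : (1 - D * (D - 2) * x) ^ (d - 1)
      = (1 - D * (D - 2) * x) ^ (d - 2) * (1 - D * (D - 2) * x) := by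
    rw [hsucc, pow_succ]
  have hy : ((1 - D * (D - 1) * x) / (1 - D * (D - 2) * x)) ^ (d - 1)
      = D * x / (1 - D * (D - 2) * x) := by
    rw [div_pow, hmain, hupow]
    field_simp
  rw [hy]
  rw [← add_div, sub_eq_zero, div_eq_one_iff_eq hune]
  ring
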